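/- arXiv:1205.6350 — 2 statements merged into one kernel-verified Lean document; each statement's English description precedes it below -/
import Mathlib

section
/- Assume moreover f' > 0 (hence g' < 0) on I. Then the coefficients of the second fundamental form of the meridian surface of parabolic type are: ⟨z_uu,n₁⟩ = 0, ⟨z_uv,n₁⟩ = 0, ⟨z_uv,n₂⟩ = 0, ⟨z_uu,n₂⟩ = (f''g' − g''f')/√(−2f'g'), ⟨z_vv,n₁⟩ = f(φφ̈ − φ² − 2φ̇²)/√(φ̇² + φ²), and ⟨z_vv,n₂⟩ = −f·√(−f'/(2g'))·(φ̇² + φ²), at every (u,v) ∈ I × J. -/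
namespace MeridianParabolic

noncomputable section

/-- The Minkowski inner product of signature (3,1) on `ℝ⁴`:
`⟨x,y⟩ = x₁y₁ + x₂y₂ + x₃y₃ − x₄y₄`. -/
def mink (x y : Fin 4 → ℝ) : ℝ := x 0 * y 0 + x 1 * y 1 + x 2 * y 2 - x 3 * y 3

/-- The first standard basis vector `e₁`. -/
def e1 : Fin 4 → ℝ := ![1, 0, 0, 0]

/-- The second standard basis vector `e₂`. -/
def e2 : Fin 4 → ℝ := ![0, 1, 0, 0]

/-- The lightlike vector `ξ₁ = (e₃ + e₄)/√2`. -/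
def xi1 : Fin 4 → ℝ := ![0, 0, 1 / Real.sqrt 2, 1 / Real.sqrt 2]

/-- The lightlike vector `ξ₂ = (−e₃ + e₄)/√2`. -/
def xi2 : Fin 4 → ℝ := ![0, 0, -(1 / Real.sqrt 2), 1 / Real.sqrt 2]

/-- The meridian surface of parabolic type
`z(u,v) = fφ cos v · e₁ + fφ sin v · e₂ + (fφ²/2 + g) ξ₁ + f ξ₂`. -/
def z (f g φ : ℝ → ℝ) (u v : ℝ) : Fin 4 → ℝ :=
  (f u * φ v * Real.cos v) • e1 + (f u * φ v * Real.sin v) • e2 +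
    (f u * (φ v) ^ 2 / 2 + g u) • xi1 + f u • xi2

/-- The partial derivative `z_u`. -/
def zu (f g φ : ℝ → ℝ) (u v : ℝ) : Fin 4 → ℝ := deriv (fun t => z f g φ t v) u

/-- The partial derivative `z_v`. -/
def zv (f g φ : ℝ → ℝ) (u v : ℝ) : Fin 4 → ℝ := deriv (fun t => z f g φ u t) v

/-- The second partial derivative `z_uu`. -/
def zuu (f g φ : ℝ → ℝ) (u v : ℝ) : Fin 4 → ℝ := deriv (fun t => zu f g φ t v) u

/-- The second partial derivative `z_uv`. -/
def zuv (f g φ : ℝ → ℝ) (u v : ℝ) : Fin 4 → ℝ := deriv (fun t => zu f g φ u t) v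

/-- The second partial derivative `z_vv`. -/
def zvv (f g φ : ℝ → ℝ) (u v : ℝ) : Fin 4 → ℝ := deriv (fun t => zv f g φ u t) v

/-- The normal field `n₁ = ((φ̇ sin v + φ cos v) e₁ + (−φ̇ cos v + φ sin v) e₂ + φ² ξ₁)/√(φ̇² + φ²)`. -/
def n1 (φ : ℝ → ℝ) (v : ℝ) : Fin 4 → ℝ :=
  (Real.sqrt ((deriv φ v) ^ 2 + (φ v) ^ 2))⁻¹ •
    ((deriv φ v * Real.sin v + φ v * Real.cos v) • e1 +
      (-(deriv φ v) * Real.cos v + φ v * Real.sin v) • e2 + (φ v) ^ 2 • xi1)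

/-- The normal field `n₂ = √(−f'/(2g')) (φ cos v e₁ + φ sin v e₂ + ((f'φ² − 2g')/(2f')) ξ₁ + ξ₂)`. -/
def n2 (f g φ : ℝ → ℝ) (u v : ℝ) : Fin 4 → ℝ :=
  Real.sqrt (-(deriv f u) / (2 * deriv g u)) •
    ((φ v * Real.cos v) • e1 + (φ v * Real.sin v) • e2 +
      ((deriv f u * (φ v) ^ 2 - 2 * deriv g u) / (2 * deriv f u)) • xi1 + xi2)

lemma hasDerivAt_comb {a b c d : ℝ → ℝ} {a' b' c' d' t : ℝ}
    (ha : HasDerivAt a a' t) (hb : HasDerivAt b b' t)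
    (hc : HasDerivAt c c' t) (hd : HasDerivAt d d' t) :
    HasDerivAt (fun s => a s • e1 + b s • e2 + c s • xi1 + d s • xi2)
      (a' • e1 + b' • e2 + c' • xi1 + d' • xi2) t :=
  (((ha.smul_const e1).add (hb.smul_const e2)).add (hc.smul_const xi1)).add (hd.smul_const xi2)

lemma zu_eq {f g φ : ℝ → ℝ} {u : ℝ} (v : ℝ)
    (hfu : DifferentiableAt ℝ f u) (hgu : DifferentiableAt ℝ g u) :
    zu f g φ u v = (deriv f u * φ v * Real.cos v) • e1 + (deriv f u * φ v * Real.sin v) • e2 +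
      (deriv f u * (φ v) ^ 2 / 2 + deriv g u) • xi1 + deriv f u • xi2 := by
  have hA : HasDerivAt (fun t => f t * φ v * Real.cos v) (deriv f u * φ v * Real.cos v) u :=
    (hfu.hasDerivAt.mul_const (φ v)).mul_const (Real.cos v)
  have hB : HasDerivAt (fun t => f t * φ v * Real.sin v) (deriv f u * φ v * Real.sin v) u :=
    (hfu.hasDerivAt.mul_const (φ v)).mul_const (Real.sin v)
  have hC : HasDerivAt (fun t => f t * (φ v) ^ 2 / 2 + g t)
      (deriv f u * (φ v) ^ 2 / 2 + deriv g u) u :=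
    ((hfu.hasDerivAt.mul_const ((φ v) ^ 2)).div_const 2).add hgu.hasDerivAt
  exact (hasDerivAt_comb hA hB hC hfu.hasDerivAt).deriv

lemma zuu_eq {I : Set ℝ} (hI : IsOpen I) {f g φ : ℝ → ℝ} {u : ℝ} (hu : u ∈ I) (v : ℝ)
    (hfd : ∀ t ∈ I, DifferentiableAt ℝ f t) (hgd : ∀ t ∈ I, DifferentiableAt ℝ g t)
    (hf2 : DifferentiableAt ℝ (deriv f) u) (hg2 : DifferentiableAt ℝ (deriv g) u) :
    zuu f g φ u v = (deriv (deriv f) u * φ v * Real.cos v) • e1 +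
      (deriv (deriv f) u * φ v * Real.sin v) • e2 +
      (deriv (deriv f) u * (φ v) ^ 2 / 2 + deriv (deriv g) u) • xi1 +
      deriv (deriv f) u • xi2 := by
  have hev : (fun t => zu f g φ t v) =ᶠ[nhds u] (fun t =>
      (deriv f t * φ v * Real.cos v) • e1 + (deriv f t * φ v * Real.sin v) • e2 +
      (deriv f t * (φ v) ^ 2 / 2 + deriv g t) • xi1 + deriv f t • xi2) := by
    filter_upwards [hI.mem_nhds hu] with t ht
    exact zu_eq v (hfd t ht) (hgd t ht)
  rw [zuu, hev.deriv_eq]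
  have hA : HasDerivAt (fun t => deriv f t * φ v * Real.cos v)
      (deriv (deriv f) u * φ v * Real.cos v) u :=
    (hf2.hasDerivAt.mul_const (φ v)).mul_const (Real.cos v)
  have hB : HasDerivAt (fun t => deriv f t * φ v * Real.sin v)
      (deriv (deriv f) u * φ v * Real.sin v) u :=
    (hf2.hasDerivAt.mul_const (φ v)).mul_const (Real.sin v)
  have hC : HasDerivAt (fun t => deriv f t * (φ v) ^ 2 / 2 + deriv g t)
      (deriv (deriv f) u * (φ v) ^ 2 / 2 + deriv (deriv g) u) u :=
    ((hf2.hasDerivAt.mul_const ((φ v) ^ 2)).div_const 2).add hg2.hasDerivAt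
  exact (hasDerivAt_comb hA hB hC hf2.hasDerivAt).deriv

lemma zuv_eq {f g φ : ℝ → ℝ} {u v : ℝ}
    (hfu : DifferentiableAt ℝ f u) (hgu : DifferentiableAt ℝ g u)
    (hφv : DifferentiableAt ℝ φ v) :
    zuv f g φ u v = (deriv f u * (deriv φ v * Real.cos v - φ v * Real.sin v)) • e1 +
      (deriv f u * (deriv φ v * Real.sin v + φ v * Real.cos v)) • e2 +
      (deriv f u * φ v * deriv φ v) • xi1 + (0 : ℝ) • xi2 := by
  have hfn : (fun t => zu f g φ u t) = (fun t =>
      (deriv f u * φ t * Real.cos t) • e1 + (deriv f u * φ t * Real.sin t) • e2 +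
      (deriv f u * (φ t) ^ 2 / 2 + deriv g u) • xi1 + deriv f u • xi2) :=
    funext fun t => zu_eq t hfu hgu
  rw [zuv, hfn]
  have hA : HasDerivAt (fun t => deriv f u * φ t * Real.cos t)
      (deriv f u * (deriv φ v * Real.cos v - φ v * Real.sin v)) v := by
    have h := (hφv.hasDerivAt.const_mul (deriv f u)).mul (Real.hasDerivAt_cos v)
    convert h using 1 <;> first | rfl | ring
  have hB : HasDerivAt (fun t => deriv f u * φ t * Real.sin t)
      (deriv f u * (deriv φ v * Real.sin v + φ v * Real.cos v)) v := by
    have h := (hφv.hasDerivAt.const_mul (deriv f u)).mul (Real.hasDerivAt_sin v)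
    convert h using 1 <;> first | rfl | ring
  have hC : HasDerivAt (fun t => deriv f u * (φ t) ^ 2 / 2 + deriv g u)
      (deriv f u * φ v * deriv φ v) v := by
    have h := (((hφv.hasDerivAt.pow 2).const_mul (deriv f u)).div_const 2).add_const (deriv g u)
    convert h using 1 <;> first | rfl | ring
  exact (hasDerivAt_comb hA hB hC (hasDerivAt_const v (deriv f u))).deriv

lemma zv_eq {f g φ : ℝ → ℝ} {v : ℝ} (u : ℝ) (hφv : DifferentiableAt ℝ φ v) :
    zv f g φ u v = (f u * (deriv φ v * Real.cos v - φ v * Real.sin v)) • e1 +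
      (f u * (deriv φ v * Real.sin v + φ v * Real.cos v)) • e2 +
      (f u * φ v * deriv φ v) • xi1 + (0 : ℝ) • xi2 := by
  have hA : HasDerivAt (fun t => f u * φ t * Real.cos t)
      (f u * (deriv φ v * Real.cos v - φ v * Real.sin v)) v := by
    have h := (hφv.hasDerivAt.const_mul (f u)).mul (Real.hasDerivAt_cos v)
    convert h using 1 <;> first | rfl | ring
  have hB : HasDerivAt (fun t => f u * φ t * Real.sin t)
      (f u * (deriv φ v * Real.sin v + φ v * Real.cos v)) v := by
    have h := (hφv.hasDerivAt.const_mul (f u)).mul (Real.hasDerivAt_sin v)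
    convert h using 1 <;> first | rfl | ring
  have hC : HasDerivAt (fun t => f u * (φ t) ^ 2 / 2 + g u)
      (f u * φ v * deriv φ v) v := by
    have h := (((hφv.hasDerivAt.pow 2).const_mul (f u)).div_const 2).add_const (g u)
    convert h using 1 <;> first | rfl | ring
  exact (hasDerivAt_comb hA hB hC (hasDerivAt_const v (f u))).deriv

lemma zvv_eq {J : Set ℝ} (hJ : IsOpen J) {f g φ : ℝ → ℝ} (u : ℝ) {v : ℝ} (hv : v ∈ J)
    (hφd : ∀ t ∈ J, DifferentiableAt ℝ φ t) (hφ2 : DifferentiableAt ℝ (deriv φ) v) :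
    zvv f g φ u v =
      (f u * (deriv (deriv φ) v * Real.cos v - 2 * deriv φ v * Real.sin v - φ v * Real.cos v)) • e1 +
      (f u * (deriv (deriv φ) v * Real.sin v + 2 * deriv φ v * Real.cos v - φ v * Real.sin v)) • e2 +
      (f u * ((deriv φ v) ^ 2 + φ v * deriv (deriv φ) v)) • xi1 + (0 : ℝ) • xi2 := by
  have hev : (fun t => zv f g φ u t) =ᶠ[nhds v] (fun t =>
      (f u * (deriv φ t * Real.cos t - φ t * Real.sin t)) • e1 +
      (f u * (deriv φ t * Real.sin t + φ t * Real.cos t)) • e2 +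
      (f u * φ t * deriv φ t) • xi1 + (0 : ℝ) • xi2) := by
    filter_upwards [hJ.mem_nhds hv] with t ht
    exact zv_eq u (hφd t ht)
  rw [zvv, hev.deriv_eq]
  have hφv := hφd v hv
  have hA : HasDerivAt (fun t => f u * (deriv φ t * Real.cos t - φ t * Real.sin t))
      (f u * (deriv (deriv φ) v * Real.cos v - 2 * deriv φ v * Real.sin v - φ v * Real.cos v)) v := by
    have h := (((hφ2.hasDerivAt.mul (Real.hasDerivAt_cos v)).sub
      (hφv.hasDerivAt.mul (Real.hasDerivAt_sin v))).const_mul (f u))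
    convert h using 1 <;> first | rfl | ring
  have hB : HasDerivAt (fun t => f u * (deriv φ t * Real.sin t + φ t * Real.cos t))
      (f u * (deriv (deriv φ) v * Real.sin v + 2 * deriv φ v * Real.cos v - φ v * Real.sin v)) v := by
    have h := (((hφ2.hasDerivAt.mul (Real.hasDerivAt_sin v)).add
      (hφv.hasDerivAt.mul (Real.hasDerivAt_cos v))).const_mul (f u))
    convert h using 1 <;> first | rfl | ring
  have hC : HasDerivAt (fun t => f u * φ t * deriv φ t)
      (f u * ((deriv φ v) ^ 2 + φ v * deriv (deriv φ) v)) v := by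
    have h := ((hφv.hasDerivAt.const_mul (f u)).mul hφ2.hasDerivAt)
    convert h using 1 <;> first | rfl | ring
  exact (hasDerivAt_comb hA hB hC (hasDerivAt_const v (0:ℝ))).deriv

lemma contDiffOn_deriv_top {f : ℝ → ℝ} {I : Set ℝ} (hI : IsOpen I)
    (hf : ContDiffOn ℝ (⊤ : ℕ∞) f I) : ContDiffOn ℝ (⊤ : ℕ∞) (deriv f) I :=
  hf.deriv_of_isOpen hI (by simp)

lemma mink_comb (a b c d a' b' c' d' : ℝ) :
    mink (a • e1 + b • e2 + c • xi1 + d • xi2) (a' • e1 + b' • e2 + c' • xi1 + d' • xi2)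
      = a * a' + b * b' - (c * d' + d * c') := by
  have h2 : Real.sqrt 2 * Real.sqrt 2 = 2 := Real.mul_self_sqrt (by norm_num)
  have hinv : (Real.sqrt 2)⁻¹ * (Real.sqrt 2)⁻¹ = 1/2 := by
    rw [← mul_inv, h2]; norm_num
  simp [mink, e1, e2, xi1, xi2]
  linear_combination (-2*c*d' - 2*d*c') * hinv

lemma mink_smul_right (x y : Fin 4 → ℝ) (r : ℝ) : mink x (r • y) = r * mink x y := by
  simp [mink]; ring


/-- assuming `f' > 0` (hence `g' < 0`), the coefficients of the second
fundamental form of the meridian surface of parabolic type are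
`⟨z_uu,n₁⟩ = 0`, `⟨z_uv,n₁⟩ = 0`, `⟨z_uv,n₂⟩ = 0`,
`⟨z_uu,n₂⟩ = (f''g' − g''f')/√(−2f'g')`,
`⟨z_vv,n₁⟩ = f(φφ̈ − φ² − 2φ̇²)/√(φ̇² + φ²)`, and
`⟨z_vv,n₂⟩ = −f·√(−f'/(2g'))·(φ̇² + φ²)`. -/
theorem statement4
    (I J : Set ℝ) (hIopen : IsOpen I) (hIconn : IsPreconnected I)
    (hJopen : IsOpen J) (hJconn : IsPreconnected J)
    (f g φ : ℝ → ℝ)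
    (hf : ContDiffOn ℝ (⊤ : ℕ∞) f I) (hg : ContDiffOn ℝ (⊤ : ℕ∞) g I)
    (hφ : ContDiffOn ℝ (⊤ : ℕ∞) φ J)
    (hfpos : ∀ u ∈ I, 0 < f u)
    (hfg : ∀ u ∈ I, 0 < -(deriv f u * deriv g u))
    (hφpos : ∀ v ∈ J, 0 < (deriv φ v) ^ 2 + (φ v) ^ 2)
    (hfd : ∀ u ∈ I, 0 < deriv f u) (hgd : ∀ u ∈ I, deriv g u < 0) :
    ∀ u ∈ I, ∀ v ∈ J,
      mink (zuu f g φ u v) (n1 φ v) = 0 ∧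
      mink (zuv f g φ u v) (n1 φ v) = 0 ∧
      mink (zuv f g φ u v) (n2 f g φ u v) = 0 ∧
      mink (zuu f g φ u v) (n2 f g φ u v) =
        (deriv (deriv f) u * deriv g u - deriv (deriv g) u * deriv f u) /
          Real.sqrt (-2 * deriv f u * deriv g u) ∧
      mink (zvv f g φ u v) (n1 φ v) =
        f u * (φ v * deriv (deriv φ) v - (φ v) ^ 2 - 2 * (deriv φ v) ^ 2) /
          Real.sqrt ((deriv φ v) ^ 2 + (φ v) ^ 2) ∧
      mink (zvv f g φ u v) (n2 f g φ u v) =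
        -(f u) * Real.sqrt (-(deriv f u) / (2 * deriv g u)) *
          ((deriv φ v) ^ 2 + (φ v) ^ 2) := by
  intro u hu v hv
  -- differentiability facts
  have hfd1 : ∀ t ∈ I, DifferentiableAt ℝ f t := fun t ht =>
    (hf.contDiffAt (hIopen.mem_nhds ht)).differentiableAt (by simp)
  have hgd1 : ∀ t ∈ I, DifferentiableAt ℝ g t := fun t ht =>
    (hg.contDiffAt (hIopen.mem_nhds ht)).differentiableAt (by simp)
  have hφd1 : ∀ t ∈ J, DifferentiableAt ℝ φ t := fun t ht =>
    (hφ.contDiffAt (hJopen.mem_nhds ht)).differentiableAt (by simp)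
  have hf2 : DifferentiableAt ℝ (deriv f) u :=
    (((contDiffOn_deriv_top hIopen hf).contDiffAt
      (hIopen.mem_nhds hu)).differentiableAt (by simp))
  have hg2 : DifferentiableAt ℝ (deriv g) u :=
    (((contDiffOn_deriv_top hIopen hg).contDiffAt
      (hIopen.mem_nhds hu)).differentiableAt (by simp))
  have hφ2 : DifferentiableAt ℝ (deriv φ) v :=
    (((contDiffOn_deriv_top hJopen hφ).contDiffAt
      (hJopen.mem_nhds hv)).differentiableAt (by simp))
  -- normal fields in 4-term combination shape
  have hn1 : n1 φ v = (Real.sqrt ((deriv φ v) ^ 2 + (φ v) ^ 2))⁻¹ •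
      ((deriv φ v * Real.sin v + φ v * Real.cos v) • e1 +
        (-(deriv φ v) * Real.cos v + φ v * Real.sin v) • e2 + (φ v) ^ 2 • xi1 + (0:ℝ) • xi2) := by
    rw [n1]; simp
  have hn2 : n2 f g φ u v = Real.sqrt (-(deriv f u) / (2 * deriv g u)) •
      ((φ v * Real.cos v) • e1 + (φ v * Real.sin v) • e2 +
        ((deriv f u * (φ v) ^ 2 - 2 * deriv g u) / (2 * deriv f u)) • xi1 + (1:ℝ) • xi2) := by
    rw [n2, one_smul]
  have hsc : Real.sin v ^ 2 + Real.cos v ^ 2 = 1 := Real.sin_sq_add_cos_sq v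
  have hfpos' : 0 < deriv f u := hfd u hu
  have hfne : deriv f u ≠ 0 := ne_of_gt hfpos'
  have hgneg : deriv g u < 0 := hgd u hu
  have hXpos : 0 < -2 * deriv f u * deriv g u := by nlinarith
  have hsX : 0 < Real.sqrt (-2 * deriv f u * deriv g u) := Real.sqrt_pos.2 hXpos
  have hm : Real.sqrt (-(deriv f u) / (2 * deriv g u))
      = deriv f u / Real.sqrt (-2 * deriv f u * deriv g u) := by
    have h1 : -(deriv f u) / (2 * deriv g u)
        = (deriv f u / Real.sqrt (-2 * deriv f u * deriv g u)) ^ 2 := by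
      rw [div_pow, Real.sq_sqrt hXpos.le]
      field_simp [hfne, ne_of_lt hgneg]
    rw [h1, Real.sqrt_sq (le_of_lt (div_pos hfpos' hsX))]
  have hzuu := zuu_eq (φ := φ) hIopen hu v hfd1 hgd1 hf2 hg2
  have hzuv := zuv_eq (hfd1 u hu) (hgd1 u hu) (hφd1 v hv)
  have hzvv := zvv_eq (f := f) (g := g) hJopen u hv hφd1 hφ2
  refine ⟨?_, ?_, ?_, ?_, ?_, ?_⟩
  · rw [hzuu, hn1, mink_smul_right, mink_comb]
    linear_combination ((Real.sqrt ((deriv φ v) ^ 2 + (φ v) ^ 2))⁻¹ *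
      deriv (deriv f) u * (φ v) ^ 2) * hsc
  · rw [hzuv, hn1, mink_smul_right, mink_comb]
    ring
  · rw [hzuv, hn2, mink_smul_right, mink_comb]
    linear_combination (Real.sqrt (-(deriv f u) / (2 * deriv g u)) *
      deriv f u * φ v * deriv φ v) * hsc
  · rw [hzuu, hn2, mink_smul_right, mink_comb, hm]
    have htrig : deriv (deriv f) u * φ v * Real.cos v * (φ v * Real.cos v) +
        deriv (deriv f) u * φ v * Real.sin v * (φ v * Real.sin v)
        = deriv (deriv f) u * (φ v) ^ 2 := by
      linear_combination (deriv (deriv f) u * (φ v) ^ 2) * hsc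
    rw [htrig]
    have hfi : deriv f u * (deriv f u)⁻¹ = 1 := mul_inv_cancel₀ hfne
    linear_combination ((Real.sqrt (-2 * deriv f u * deriv g u))⁻¹ *
      (deriv (deriv f) u * deriv g u -
        deriv f u * deriv (deriv f) u * (φ v) ^ 2 / 2)) * hfi
  · rw [hzvv, hn1, mink_smul_right, mink_comb, div_eq_inv_mul]
    congr 1
    linear_combination (f u * (φ v * deriv (deriv φ) v - (φ v) ^ 2 -
      2 * (deriv φ v) ^ 2)) * hsc
  · rw [hzvv, hn2, mink_smul_right, mink_comb]
    linear_combination (Real.sqrt (-(deriv f u) / (2 * deriv g u)) * f u *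
      (φ v * deriv (deriv φ) v - (φ v) ^ 2)) * hsc

end
end MeridianParabolic
end

section
/- (Marginally trapped developable meridian surfaces of parabolic type.) Take f(u) = u on an open interval I ⊂ (0,∞) and g(u) = au + b with constants a < 0 and b (so κ_m ≡ 0 and the surface is a developable ruled surface, a cone). Then the meridian surface of parabolic type is marginally trapped, i.e. ⟨H(u,v),H(u,v)⟩ = 0 for all (u,v) ∈ I × J, if and only if κ̄(v)² = −1/(2a) for all v ∈ J. -/
namespace MeridianParabolic

noncomputable section

/-- The curvature `κ_m(u) = (f'g'' − g'f'')/(−2f'g')^{3/2}` of the meridians. -/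
def kappam (f g : ℝ → ℝ) (u : ℝ) : ℝ :=
  (deriv f u * deriv (deriv g) u - deriv g u * deriv (deriv f) u) /
    (-2 * deriv f u * deriv g u) ^ ((3 : ℝ) / 2)

/-- The curvature `κ̄(v) = (φφ̈ − 2φ̇² − φ²)/(φ̇² + φ²)^{3/2}`. -/
def kappabar (φ : ℝ → ℝ) (v : ℝ) : ℝ :=
  (φ v * deriv (deriv φ) v - 2 * (deriv φ v) ^ 2 - (φ v) ^ 2) /
    ((deriv φ v) ^ 2 + (φ v) ^ 2) ^ ((3 : ℝ) / 2)

/-- The mean curvature vector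
`H = (1/2)(⟨z_uu,n₁⟩/E + ⟨z_vv,n₁⟩/G) n₁ − (1/2)(⟨z_uu,n₂⟩/E + ⟨z_vv,n₂⟩/G) n₂`,
where `E = ⟨z_u,z_u⟩` and `G = ⟨z_v,z_v⟩`. -/
def Hvec (f g φ : ℝ → ℝ) (u v : ℝ) : Fin 4 → ℝ :=
  (1 / 2 * (mink (zuu f g φ u v) (n1 φ v) / mink (zu f g φ u v) (zu f g φ u v) +
      mink (zvv f g φ u v) (n1 φ v) / mink (zv f g φ u v) (zv f g φ u v))) • n1 φ v -
  (1 / 2 * (mink (zuu f g φ u v) (n2 f g φ u v) / mink (zu f g φ u v) (zu f g φ u v) +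
      mink (zvv f g φ u v) (n2 f g φ u v) / mink (zv f g φ u v) (zv f g φ u v))) • n2 f g φ u v

/- Auxiliary development -/
private lemma hd_affine (c d u : ℝ) : HasDerivAt (fun t => c*t+d) c u := by
  simpa using ((hasDerivAt_id u).const_mul c).add_const d

private lemma hd_val {f : ℝ → ℝ} {d d' x : ℝ} (h : HasDerivAt f d x) (e : d = d') :
    HasDerivAt f d' x := e ▸ h

/-- `z` written componentwise. -/
lemma z_apply (f g φ : ℝ → ℝ) (u v : ℝ) :
    z f g φ u v = ![f u * φ v * Real.cos v, f u * φ v * Real.sin v,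
      (f u * (φ v)^2/2 + g u - f u) * (Real.sqrt 2)⁻¹,
      (f u * (φ v)^2/2 + g u + f u) * (Real.sqrt 2)⁻¹] := by
  funext i
  fin_cases i <;>
    simp [z, e1, e2, xi1, xi2, one_div] <;> ring

lemma zu_eq_s9 (a b : ℝ) (φ : ℝ → ℝ) (u v : ℝ) :
    zu (fun t => t) (fun t => a*t+b) φ u v =
      ![φ v * Real.cos v, φ v * Real.sin v,
        ((φ v)^2/2 + a - 1) * (Real.sqrt 2)⁻¹,
        ((φ v)^2/2 + a + 1) * (Real.sqrt 2)⁻¹] := by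
  rw [zu]
  have hz : (fun t => z (fun t => t) (fun t => a*t+b) φ t v)
      = fun t => ![t * φ v * Real.cos v, t * φ v * Real.sin v,
        (t * (φ v)^2/2 + (a*t+b) - t) * (Real.sqrt 2)⁻¹,
        (t * (φ v)^2/2 + (a*t+b) + t) * (Real.sqrt 2)⁻¹] :=
    funext fun t => z_apply _ _ φ t v
  rw [hz]
  refine HasDerivAt.deriv (hasDerivAt_pi.2 ?_)
  intro i
  fin_cases i <;> simp only [Matrix.cons_val_zero, Matrix.cons_val_one, Matrix.head_cons,
    Matrix.cons_val_two, Matrix.tail_cons, Matrix.cons_val_three]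
  · exact (hd_affine (φ v * Real.cos v) 0 u).congr_of_eventuallyEq
      (Filter.Eventually.of_forall fun t => by simp <;> first | (left; ring) | tauto | ring)
  · exact (hd_affine (φ v * Real.sin v) 0 u).congr_of_eventuallyEq
      (Filter.Eventually.of_forall fun t => by simp <;> first | (left; ring) | tauto | ring)
  · exact (hd_affine (((φ v)^2/2 + a - 1) * (Real.sqrt 2)⁻¹) (b * (Real.sqrt 2)⁻¹) u).congr_of_eventuallyEq
      (Filter.Eventually.of_forall fun t => by simp <;> first | (left; ring) | tauto | ring)
  · exact (hd_affine (((φ v)^2/2 + a + 1) * (Real.sqrt 2)⁻¹) (b * (Real.sqrt 2)⁻¹) u).congr_of_eventuallyEq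
      (Filter.Eventually.of_forall fun t => by simp <;> first | (left; ring) | tauto | ring)

lemma zuu_eq_s9 (a b : ℝ) (φ : ℝ → ℝ) (u v : ℝ) :
    zuu (fun t => t) (fun t => a*t+b) φ u v = 0 := by
  rw [zuu]
  have hz : (fun t => zu (fun t => t) (fun t => a*t+b) φ t v)
      = fun _ => ![φ v * Real.cos v, φ v * Real.sin v,
        ((φ v)^2/2 + a - 1) * (Real.sqrt 2)⁻¹,
        ((φ v)^2/2 + a + 1) * (Real.sqrt 2)⁻¹] :=
    funext fun t => zu_eq_s9 a b φ t v
  rw [hz, deriv_const]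

section Jlemmas

variable {J : Set ℝ} {φ : ℝ → ℝ}

private lemma hdphi (hJ : IsOpen J) (hφ : ContDiffOn ℝ (⊤ : ℕ∞) φ J) {v : ℝ} (hv : v ∈ J) : HasDerivAt φ (deriv φ v) v :=
  ((hφ.contDiffAt (hJ.mem_nhds hv)).differentiableAt (by simp)).hasDerivAt

private lemma hdphi' (hJ : IsOpen J) (hφ : ContDiffOn ℝ (⊤ : ℕ∞) φ J) {v : ℝ} (hv : v ∈ J) : HasDerivAt (deriv φ) (deriv (deriv φ) v) v :=
  ((((hφ.deriv_of_isOpen hJ (m := (⊤:ℕ∞)) (by exact_mod_cast le_top)).contDiffAt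
    (hJ.mem_nhds hv)).differentiableAt (by simp)).hasDerivAt)

lemma zv_eq_s9 (hJ : IsOpen J) (hφ : ContDiffOn ℝ (⊤ : ℕ∞) φ J) (a b : ℝ) (u : ℝ) {v : ℝ} (hv : v ∈ J) :
    zv (fun t => t) (fun t => a*t+b) φ u v =
      ![u * (deriv φ v * Real.cos v - φ v * Real.sin v),
        u * (deriv φ v * Real.sin v + φ v * Real.cos v),
        u * (φ v * deriv φ v) * (Real.sqrt 2)⁻¹,
        u * (φ v * deriv φ v) * (Real.sqrt 2)⁻¹] := by
  rw [zv]
  have hz : (fun t => z (fun t => t) (fun t => a*t+b) φ u t)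
      = fun t => ![u * φ t * Real.cos t, u * φ t * Real.sin t,
        (u * (φ t)^2/2 + (a*u+b) - u) * (Real.sqrt 2)⁻¹,
        (u * (φ t)^2/2 + (a*u+b) + u) * (Real.sqrt 2)⁻¹] :=
    funext fun t => z_apply _ _ φ u t
  rw [hz]
  refine HasDerivAt.deriv (hasDerivAt_pi.2 ?_)
  have hp := hdphi hJ hφ hv
  intro i
  fin_cases i <;> simp only [Matrix.cons_val_zero, Matrix.cons_val_one, Matrix.head_cons,
    Matrix.cons_val_two, Matrix.tail_cons, Matrix.cons_val_three]
  · refine HasDerivAt.congr_of_eventuallyEq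
      (hd_val ((hp.mul (Real.hasDerivAt_cos v)).const_mul u) (by simp <;> first | (left; ring) | tauto | ring))
      (Filter.Eventually.of_forall fun t => by simp <;> first | (left; ring) | tauto | ring)
  · refine HasDerivAt.congr_of_eventuallyEq
      (hd_val ((hp.mul (Real.hasDerivAt_sin v)).const_mul u) (by simp <;> first | (left; ring) | tauto | ring))
      (Filter.Eventually.of_forall fun t => by simp <;> first | (left; ring) | tauto | ring)
  · refine HasDerivAt.congr_of_eventuallyEq
      (hd_val (((hp.pow 2).mul_const (u * (Real.sqrt 2)⁻¹ / 2)).add_const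
        ((a*u+b-u) * (Real.sqrt 2)⁻¹)) (by push_cast; simp <;> first | (left; ring) | tauto | ring))
      (Filter.Eventually.of_forall fun t => by simp <;> first | (left; ring) | tauto | ring)
  · refine HasDerivAt.congr_of_eventuallyEq
      (hd_val (((hp.pow 2).mul_const (u * (Real.sqrt 2)⁻¹ / 2)).add_const
        ((a*u+b+u) * (Real.sqrt 2)⁻¹)) (by push_cast; simp <;> first | (left; ring) | tauto | ring))
      (Filter.Eventually.of_forall fun t => by simp <;> first | (left; ring) | tauto | ring)

lemma zvv_eq_s9 (hJ : IsOpen J) (hφ : ContDiffOn ℝ (⊤ : ℕ∞) φ J) (a b : ℝ) (u : ℝ) {v : ℝ} (hv : v ∈ J) :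
    zvv (fun t => t) (fun t => a*t+b) φ u v =
      ![u * (deriv (deriv φ) v * Real.cos v - 2 * deriv φ v * Real.sin v - φ v * Real.cos v),
        u * (deriv (deriv φ) v * Real.sin v + 2 * deriv φ v * Real.cos v - φ v * Real.sin v),
        u * ((deriv φ v)^2 + φ v * deriv (deriv φ) v) * (Real.sqrt 2)⁻¹,
        u * ((deriv φ v)^2 + φ v * deriv (deriv φ) v) * (Real.sqrt 2)⁻¹] := by
  rw [zvv]
  have hev : (fun t => zv (fun t => t) (fun t => a*t+b) φ u t) =ᶠ[nhds v]
      (fun t => ![u * (deriv φ t * Real.cos t - φ t * Real.sin t),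
        u * (deriv φ t * Real.sin t + φ t * Real.cos t),
        u * (φ t * deriv φ t) * (Real.sqrt 2)⁻¹,
        u * (φ t * deriv φ t) * (Real.sqrt 2)⁻¹]) := by
    filter_upwards [hJ.mem_nhds hv] with t ht
    exact zv_eq_s9 hJ hφ a b u ht
  rw [hev.deriv_eq]
  refine HasDerivAt.deriv (hasDerivAt_pi.2 ?_)
  have hp := hdphi hJ hφ hv
  have hp' := hdphi' hJ hφ hv
  intro i
  fin_cases i <;> simp only [Matrix.cons_val_zero, Matrix.cons_val_one, Matrix.head_cons,
    Matrix.cons_val_two, Matrix.tail_cons, Matrix.cons_val_three]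
  · refine HasDerivAt.congr_of_eventuallyEq
      (hd_val (((hp'.mul (Real.hasDerivAt_cos v)).sub (hp.mul (Real.hasDerivAt_sin v))).const_mul u)
        (by simp <;> first | (left; ring) | tauto | ring))
      (Filter.Eventually.of_forall fun t => by simp <;> first | (left; ring) | tauto | ring)
  · refine HasDerivAt.congr_of_eventuallyEq
      (hd_val (((hp'.mul (Real.hasDerivAt_sin v)).add (hp.mul (Real.hasDerivAt_cos v))).const_mul u)
        (by simp <;> first | (left; ring) | tauto | ring))
      (Filter.Eventually.of_forall fun t => by simp <;> first | (left; ring) | tauto | ring)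
  · refine HasDerivAt.congr_of_eventuallyEq
      (hd_val ((hp.mul hp').const_mul (u * (Real.sqrt 2)⁻¹)) (by simp <;> first | (left; ring) | tauto | ring))
      (Filter.Eventually.of_forall fun t => by simp <;> first | (left; ring) | tauto | ring)
  · refine HasDerivAt.congr_of_eventuallyEq
      (hd_val ((hp.mul hp').const_mul (u * (Real.sqrt 2)⁻¹)) (by simp <;> first | (left; ring) | tauto | ring))
      (Filter.Eventually.of_forall fun t => by simp <;> first | (left; ring) | tauto | ring)

end Jlemmas

lemma n1_eq (φ : ℝ → ℝ) (v : ℝ) :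
    n1 φ v = ![(Real.sqrt ((deriv φ v)^2 + (φ v)^2))⁻¹ * (deriv φ v * Real.sin v + φ v * Real.cos v),
      (Real.sqrt ((deriv φ v)^2 + (φ v)^2))⁻¹ * (-(deriv φ v) * Real.cos v + φ v * Real.sin v),
      (Real.sqrt ((deriv φ v)^2 + (φ v)^2))⁻¹ * ((φ v)^2 * (Real.sqrt 2)⁻¹),
      (Real.sqrt ((deriv φ v)^2 + (φ v)^2))⁻¹ * ((φ v)^2 * (Real.sqrt 2)⁻¹)] := by
  funext i
  fin_cases i <;> simp [n1, e1, e2, xi1, one_div] <;> ring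

lemma n2_eq (a b : ℝ) (φ : ℝ → ℝ) (u v : ℝ) :
    n2 (fun t => t) (fun t => a*t+b) φ u v =
      ![Real.sqrt (-1/(2*a)) * (φ v * Real.cos v),
        Real.sqrt (-1/(2*a)) * (φ v * Real.sin v),
        Real.sqrt (-1/(2*a)) * ((((φ v)^2 - 2*a)/2) * (Real.sqrt 2)⁻¹ - (Real.sqrt 2)⁻¹),
        Real.sqrt (-1/(2*a)) * ((((φ v)^2 - 2*a)/2) * (Real.sqrt 2)⁻¹ + (Real.sqrt 2)⁻¹)] := by
  have hg : deriv (fun t : ℝ => a*t+b) u = a := (hd_affine a b u).deriv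
  have hf : deriv (fun t : ℝ => t) u = 1 := by simp
  funext i
  fin_cases i <;>
  · simp [n2, hg, hf, e1, e2, xi1, xi2, one_div] <;> first | (left; ring) | tauto | ring

private lemma mink_comb_s9 (x y : ℝ) (A B : Fin 4 → ℝ) :
    mink (x • A - y • B) (x • A - y • B) =
      x^2 * mink A A - 2*(x*y) * mink A B + y^2 * mink B B := by
  simp only [mink, Pi.sub_apply, Pi.smul_apply, smul_eq_mul]
  ring

lemma key {J : Set ℝ} (hJ : IsOpen J) {φ : ℝ → ℝ} (hφ : ContDiffOn ℝ (⊤ : ℕ∞) φ J)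
    (a b : ℝ) (ha : a < 0) {u v : ℝ} (hu : 0 < u) (hv : v ∈ J)
    (hq : 0 < (deriv φ v)^2 + (φ v)^2) :
    mink (Hvec (fun t => t) (fun t => a*t+b) φ u v) (Hvec (fun t => t) (fun t => a*t+b) φ u v)
      = ((kappabar φ v)^2 + 1/(2*a)) / (4*u^2) := by
  have ha' : a ≠ 0 := ha.ne
  have hu' : u ≠ 0 := hu.ne'
  have hr2 : ((Real.sqrt 2)⁻¹)^2 = 1/2 := by
    rw [inv_pow, Real.sq_sqrt (by norm_num : (0:ℝ) ≤ 2)]; norm_num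
  have hsc : (Real.sin v)^2 + (Real.cos v)^2 = 1 := Real.sin_sq_add_cos_sq v
  have hsq2 : (Real.sqrt ((deriv φ v)^2 + (φ v)^2))^2 = (deriv φ v)^2 + (φ v)^2 :=
    Real.sq_sqrt hq.le
  have hsqpos : 0 < Real.sqrt ((deriv φ v)^2 + (φ v)^2) := Real.sqrt_pos.2 hq
  have hmm : (0:ℝ) < -1/(2*a) := by
    rw [div_pos_iff]; right; constructor <;> linarith
  have hm2 : 2*a*(Real.sqrt (-1/(2*a)))^2 = -1 := by
    rw [Real.sq_sqrt hmm.le]; field_simp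
  have hinv : (Real.sqrt ((deriv φ v)^2 + (φ v)^2))⁻¹^2 * ((deriv φ v)^2 + (φ v)^2) = 1 := by
    rw [inv_pow, hsq2, inv_mul_cancel₀ hq.ne']
  have h0 : ∀ X : Fin 4 → ℝ, mink 0 X = 0 := fun X => by simp [mink]
  have hE : mink (zu (fun t => t) (fun t => a*t+b) φ u v)
      (zu (fun t => t) (fun t => a*t+b) φ u v) = -(2*a) := by
    rw [zu_eq_s9 a b φ u v]
    simp only [mink, Matrix.cons_val_zero, Matrix.cons_val_one, Matrix.head_cons,
      Matrix.cons_val_two, Matrix.tail_cons, Matrix.cons_val_three]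
    linear_combination ((φ v)^2)*hsc + (-4*((φ v)^2/2+a))*hr2
  have hG : mink (zv (fun t => t) (fun t => a*t+b) φ u v)
      (zv (fun t => t) (fun t => a*t+b) φ u v) = u^2*((deriv φ v)^2 + (φ v)^2) := by
    rw [zv_eq_s9 hJ hφ a b u hv]
    simp only [mink, Matrix.cons_val_zero, Matrix.cons_val_one, Matrix.head_cons,
      Matrix.cons_val_two, Matrix.tail_cons, Matrix.cons_val_three]
    linear_combination (u^2*((deriv φ v)^2 + (φ v)^2))*hsc
  have h1 : mink (zvv (fun t => t) (fun t => a*t+b) φ u v) (n1 φ v)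
      = (Real.sqrt ((deriv φ v)^2 + (φ v)^2))⁻¹ *
        (u * (φ v * deriv (deriv φ) v - 2*(deriv φ v)^2 - (φ v)^2)) := by
    rw [zvv_eq_s9 hJ hφ a b u hv, n1_eq]
    simp only [mink, Matrix.cons_val_zero, Matrix.cons_val_one, Matrix.head_cons,
      Matrix.cons_val_two, Matrix.tail_cons, Matrix.cons_val_three]
    linear_combination ((Real.sqrt ((deriv φ v)^2 + (φ v)^2))⁻¹ * u *
      (φ v * deriv (deriv φ) v - 2*(deriv φ v)^2 - (φ v)^2))*hsc
  have h2 : mink (zvv (fun t => t) (fun t => a*t+b) φ u v)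
      (n2 (fun t => t) (fun t => a*t+b) φ u v)
      = -(Real.sqrt (-1/(2*a)) * u * ((deriv φ v)^2 + (φ v)^2)) := by
    rw [zvv_eq_s9 hJ hφ a b u hv, n2_eq]
    simp only [mink, Matrix.cons_val_zero, Matrix.cons_val_one, Matrix.head_cons,
      Matrix.cons_val_two, Matrix.tail_cons, Matrix.cons_val_three]
    linear_combination (Real.sqrt (-1/(2*a))*u*(φ v*deriv (deriv φ) v - (φ v)^2))*hsc
      + (-2*Real.sqrt (-1/(2*a))*u*((deriv φ v)^2 + φ v*deriv (deriv φ) v))*hr2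
  have hn11 : mink (n1 φ v) (n1 φ v) = 1 := by
    rw [n1_eq]
    simp only [mink, Matrix.cons_val_zero, Matrix.cons_val_one, Matrix.head_cons,
      Matrix.cons_val_two, Matrix.tail_cons, Matrix.cons_val_three]
    linear_combination ((Real.sqrt ((deriv φ v)^2 + (φ v)^2))⁻¹^2 *
      ((deriv φ v)^2 + (φ v)^2))*hsc + hinv
  have hn12 : mink (n1 φ v) (n2 (fun t => t) (fun t => a*t+b) φ u v) = 0 := by
    rw [n1_eq, n2_eq]
    simp only [mink, Matrix.cons_val_zero, Matrix.cons_val_one, Matrix.head_cons,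
      Matrix.cons_val_two, Matrix.tail_cons, Matrix.cons_val_three]
    linear_combination ((Real.sqrt ((deriv φ v)^2 + (φ v)^2))⁻¹ * Real.sqrt (-1/(2*a))
      * (φ v)^2)*hsc + (-2*(Real.sqrt ((deriv φ v)^2 + (φ v)^2))⁻¹ * Real.sqrt (-1/(2*a))
      * (φ v)^2)*hr2
  have hn22 : mink (n2 (fun t => t) (fun t => a*t+b) φ u v)
      (n2 (fun t => t) (fun t => a*t+b) φ u v) = -1 := by
    rw [n2_eq]
    simp only [mink, Matrix.cons_val_zero, Matrix.cons_val_one, Matrix.head_cons,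
      Matrix.cons_val_two, Matrix.tail_cons, Matrix.cons_val_three]
    linear_combination ((Real.sqrt (-1/(2*a)))^2 * (φ v)^2)*hsc
      + (-4*(Real.sqrt (-1/(2*a)))^2*(((φ v)^2-2*a)/2))*hr2 + hm2
  have hkap : (kappabar φ v)^2
      = (φ v * deriv (deriv φ) v - 2*(deriv φ v)^2 - (φ v)^2)^2
        / ((deriv φ v)^2 + (φ v)^2)^3 := by
    rw [kappabar, div_pow]
    congr 1
    rw [← Real.rpow_natCast (((deriv φ v)^2 + (φ v)^2) ^ ((3:ℝ)/2)) 2,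
      ← Real.rpow_mul hq.le, ← Real.rpow_natCast ((deriv φ v)^2 + (φ v)^2) 3]
    norm_num
  simp only [Hvec]
  rw [mink_comb_s9, zuu_eq_s9 a b φ u v, h0, h0, h1, h2, hG, hE, hn11, hn12, hn22, hkap]
  obtain ⟨S, hS⟩ : ∃ S, Real.sqrt ((deriv φ v)^2 + (φ v)^2) = S := ⟨_, rfl⟩
  rw [hS] at hsq2 hsqpos ⊢
  rw [← hsq2]
  have hS0 : S ≠ 0 := hsqpos.ne'
  have e1 : 1/(2*a) = -(Real.sqrt (-1/(2*a)))^2 := by rw [Real.sq_sqrt hmm.le]; ring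
  rw [e1]
  have hm2' : 2*a*(Real.sqrt (a⁻¹ * (-1/2)))^2 = -1 := by
    rw [show a⁻¹ * (-1/2) = -1/(2*a) by ring]; exact hm2
  field_simp
  ring

/-- marginally trapped developable meridian surfaces of parabolic type:
with `f(u) = u` on `I ⊂ (0,∞)` and `g(u) = au + b`, `a < 0` (so `κ_m ≡ 0` and the
surface is a developable ruled surface, a cone), the meridian surface of parabolic type
is marginally trapped if and only if `κ̄(v)² = −1/(2a)` for all `v ∈ J`. -/
theorem statement9
    (I J : Set ℝ) (hIopen : IsOpen I) (hIconn : IsPreconnected I) (hIne : I.Nonempty)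
    (hIpos : I ⊆ Set.Ioi (0 : ℝ))
    (hJopen : IsOpen J) (hJconn : IsPreconnected J)
    (a b : ℝ) (ha : a < 0)
    (φ : ℝ → ℝ) (hφ : ContDiffOn ℝ (⊤ : ℕ∞) φ J)
    (hφpos : ∀ v ∈ J, 0 < (deriv φ v) ^ 2 + (φ v) ^ 2) :
    (∀ u ∈ I, ∀ v ∈ J,
        mink (Hvec (fun t => t) (fun t => a * t + b) φ u v)
          (Hvec (fun t => t) (fun t => a * t + b) φ u v) = 0) ↔
      ∀ v ∈ J, (kappabar φ v) ^ 2 = -1 / (2 * a) := by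
  constructor
  · intro h v hv
    obtain ⟨u, hu⟩ := hIne
    have hu0 : 0 < u := hIpos hu
    have hk := key hJopen hφ a b ha hu0 hv (hφpos v hv)
    rw [h u hu v hv] at hk
    have hu' : u ≠ 0 := hu0.ne'
    have ha' : a ≠ 0 := ha.ne
    have hnum : (kappabar φ v)^2 + 1/(2*a) = 0 := by
      have := (div_eq_zero_iff.mp hk.symm).resolve_right (by positivity)
      linarith [this]
    field_simp at hnum
    rw [eq_div_iff (mul_ne_zero two_ne_zero ha')]
    linarith [hnum]
  · intro h u hu v hv
    have hk := key hJopen hφ a b ha (hIpos hu) hv (hφpos v hv)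
    rw [hk, h v hv]
    ring

end
end MeridianParabolic
end
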